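/- Fix t ∈ ℕ and let α : ℕ → ℤ be the coefficients of the power series ((1+X)·(1−X)^{−1})^t = Σ_{m≥0} α_m·X^m in ℤ⟦X⟧ (equivalently, of (1 + 2Σ_{k≥1} X^k)^t). Then α₀ = 1 and for every m ≥ 1, m·α_m = 2·Σ_{k=1}^{m} (k·t − m + k)·α_{m−k}. In particular every α_m with m ≥ 1 is even. (The coefficient recursion established in the proof of Theorem 4.1.) -/

import Mathlib

open Finset PowerSeries

noncomputable def uu : PowerSeries ℤ := PowerSeries.mk 1

lemma hu' : (1 - PowerSeries.X) * uu = 1 := by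
  rw [mul_comm]; exact PowerSeries.mk_one_mul_one_sub_eq_one ℤ

lemma hinv : Ring.inverse (1 - PowerSeries.X : PowerSeries ℤ) = uu := by
  have hw : IsUnit (1 - PowerSeries.X : PowerSeries ℤ) :=
    ⟨⟨1 - PowerSeries.X, uu, hu', by rw [mul_comm]; exact hu'⟩, rfl⟩
  obtain ⟨w, hwu⟩ := hw
  rw [← hwu, Ring.inverse_unit]
  have : (w : PowerSeries ℤ) * uu = 1 := by rw [hwu]; exact hu'
  calc (↑w⁻¹ : PowerSeries ℤ) = ↑w⁻¹ * ((w : PowerSeries ℤ) * uu) := by rw [this, mul_one]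
    _ = uu := by rw [← mul_assoc, Units.inv_mul, one_mul]

lemma hdu : (1 - PowerSeries.X) * (PowerSeries.derivative ℤ uu) = uu := by
  have h := congrArg (PowerSeries.derivative ℤ) hu'
  rw [Derivation.leibniz] at h
  simp only [smul_eq_mul, map_sub, map_one, PowerSeries.derivative_X] at h
  simp only [Derivation.map_one_eq_zero] at h
  linear_combination h

lemma hdf : (1 - PowerSeries.X) * (1 + PowerSeries.X) *
    (PowerSeries.derivative ℤ ((1 + PowerSeries.X) * uu)) = 2 * ((1 + PowerSeries.X) * uu) := by
  rw [Derivation.leibniz]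
  simp only [smul_eq_mul, map_add, map_one, PowerSeries.derivative_X, Derivation.map_one_eq_zero]
  have h := hdu
  ring_nf
  ring_nf at h
  linear_combination (1 + PowerSeries.X) * (1 + PowerSeries.X) * h

lemma ode (t : ℕ) : (1 - PowerSeries.X) * (1 + PowerSeries.X) *
    (PowerSeries.derivative ℤ (((1 + PowerSeries.X) * uu) ^ t))
    = (PowerSeries.C (R := ℤ) (2 * t)) * ((1 + PowerSeries.X) * uu) ^ t := by
  induction t with
  | zero => simp
  | succ t ih =>
    rw [pow_succ, Derivation.leibniz, smul_eq_mul, smul_eq_mul]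
    have hC : (PowerSeries.C (R := ℤ)) (2 * ((t:ℤ)+1)) = PowerSeries.C (R := ℤ) (2 * t) + 2 := by
      rw [mul_add, map_add]; norm_num
    push_cast
    rw [hC]
    linear_combination (((1 + PowerSeries.X) * uu) ^ t) * hdf +
      ((1 + PowerSeries.X) * uu) * ih

lemma key (t : ℕ) : (2 * uu - 1) *
    (PowerSeries.derivative ℤ (((1 + PowerSeries.X) * uu) ^ t))
    = (PowerSeries.C (R := ℤ) (2 * t)) * (uu * uu * ((1 + PowerSeries.X) * uu) ^ t) := by
  have h := ode t
  have h2 := hu'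
  linear_combination uu * uu * h +
    ((PowerSeries.derivative ℤ (((1 + PowerSeries.X) * uu) ^ t)) *
      (1 - uu - PowerSeries.X * uu)) * h2

/-- the coefficient recursion in the proof of Theorem 4.1: for the
coefficients `α_m` of `((1+X)(1−X)^{−1})^t ∈ ℤ⟦X⟧` one has `α₀ = 1`,
`m·α_m = 2·Σ_{k=1}^{m} (k·t − m + k)·α_{m−k}` for `m ≥ 1`, and in particular every
`α_m` with `m ≥ 1` is even.  The inverse of the unit `1 − X` is taken via
`Ring.inverse`. -/
theorem alpha_recursion (t : ℕ) (α : ℕ → ℤ)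
    (hα : ∀ m : ℕ, α m = PowerSeries.coeff (R := ℤ) m
      (((1 + PowerSeries.X) * Ring.inverse (1 - PowerSeries.X : PowerSeries ℤ)) ^ t)) :
    α 0 = 1
    ∧ (∀ m : ℕ, 1 ≤ m →
        (m : ℤ) * α m = 2 * ∑ k ∈ Finset.Icc 1 m, ((k : ℤ) * t - m + k) * α (m - k))
    ∧ ∀ m : ℕ, 1 ≤ m → 2 ∣ α m := by
  simp only [hinv] at hα
  set g : PowerSeries ℤ := ((1 + PowerSeries.X) * uu) ^ t with hg
  refine ⟨?_, ?_, ?_⟩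
  · rw [hα 0]
    simp [hg, PowerSeries.coeff_zero_eq_constantCoeff, map_pow, map_mul, uu,
      PowerSeries.constantCoeff_mk]
  · intro m hm
    obtain ⟨n, rfl⟩ : ∃ n, m = n + 1 := ⟨m - 1, by omega⟩
    -- extract coefficient n from key
    have hk := congrArg (PowerSeries.coeff (R := ℤ) n) (key t)
    have e1 : (2 * uu - 1) * (PowerSeries.derivative ℤ g)
        = PowerSeries.C (R := ℤ) 2 * (uu * (PowerSeries.derivative ℤ g))
          - PowerSeries.derivative ℤ g := by
      rw [map_ofNat]; ring
    rw [← hg, e1, map_sub, PowerSeries.coeff_C_mul, PowerSeries.coeff_C_mul,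
      PowerSeries.coeff_mul, PowerSeries.coeff_mul] at hk
    simp only [uu, PowerSeries.coeff_mk, Pi.one_apply, one_mul] at hk
    rw [Finset.Nat.sum_antidiagonal_eq_sum_range_succ_mk,
      Finset.Nat.sum_antidiagonal_eq_sum_range_succ_mk] at hk
    -- coefficients of uu * uu
    have huu2 : ∀ j : ℕ, PowerSeries.coeff (R := ℤ) j (PowerSeries.mk 1 * PowerSeries.mk 1 :
        PowerSeries ℤ) = (j : ℤ) + 1 := by
      intro j
      rw [PowerSeries.coeff_mul]
      simp [Finset.Nat.card_antidiagonal]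
    simp only [huu2, PowerSeries.coeff_derivative, ← hα] at hk
    -- hk : 2 * ∑ k in range (n+1), α (n-k+1) * (↑(n-k)+1) - α (n+1) * (↑n+1)
    --      = 2*t * ∑ k in range (n+1), (↑k+1) * α (n-k)
    -- now rewrite the goal sum
    have hIcc : ∑ k ∈ Finset.Icc 1 (n+1), ((k : ℤ) * t - (↑(n+1)) + k) * α (n + 1 - k)
        = ∑ i ∈ Finset.range (n+1), (((1+i : ℕ) : ℤ) * t - (↑(n+1)) + ((1+i:ℕ):ℤ))
            * α (n - i) := by
      rw [← Finset.Ico_add_one_right_eq_Icc, Finset.sum_Ico_eq_sum_range]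
      refine Finset.sum_congr (by norm_num) fun i hi => ?_
      have : n + 1 - (1 + i) = n - i := by omega
      rw [this]
    -- reflection and shifting of sums
    have hrefl1 : ∑ k ∈ Finset.range (n+1), α (n - k + 1) * ((↑(n - k) : ℤ) + 1)
        = ∑ j ∈ Finset.range (n+1), α (j + 1) * ((j : ℤ) + 1) := by
      have := Finset.sum_range_reflect (fun j => α (j + 1) * ((j : ℤ) + 1)) (n+1)
      simpa using this
    have hA : ∑ j ∈ Finset.range (n+1), α (j + 1) * ((j : ℤ) + 1)
        = ∑ i ∈ Finset.range (n+2), α i * (i : ℤ) := by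
      rw [Finset.sum_range_succ' (fun i => α i * (i : ℤ)) (n+1)]
      push_cast
      simp
    have hC2 : ∑ i ∈ Finset.range (n+2), α i * (i : ℤ)
        = ∑ k ∈ Finset.range (n+1), α (n - k) * ((n:ℤ) - k) + α (n+1) * ((n:ℤ)+1) := by
      rw [Finset.sum_range_succ (fun i => α i * (i : ℤ)) (n+1)]
      push_cast
      congr 1
      have := Finset.sum_range_reflect (fun j => α j * (j : ℤ)) (n+1)
      rw [← this]
      refine Finset.sum_congr rfl fun k hk => ?_
      simp only [Finset.mem_range] at hk
      have h1 : n + 1 - 1 - k = n - k := by omega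
      have h2 : ((n - k : ℕ) : ℤ) = (n:ℤ) - k := by
        rw [Nat.cast_sub (by omega)]
      rw [h1, h2]
    rw [hIcc]
    -- final linear algebra
    have expand : ∑ i ∈ Finset.range (n+1), (((1+i : ℕ) : ℤ) * t - (↑(n+1)) + ((1+i:ℕ):ℤ))
            * α (n - i)
        = (t:ℤ) * ∑ k ∈ Finset.range (n+1), ((k:ℤ)+1) * α (n - k)
          - ∑ k ∈ Finset.range (n+1), α (n - k) * ((n:ℤ) - k) := by
      rw [Finset.mul_sum, ← Finset.sum_sub_distrib]
      refine Finset.sum_congr rfl fun i hi => ?_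
      push_cast
      ring
    rw [expand]
    rw [hrefl1, hA, hC2] at hk
    push_cast at hk ⊢
    linarith
  · intro m hm
    have h2 : ((α m : ZMod 2)) = 0 := by
      have hmap : PowerSeries.map (Int.castRingHom (ZMod 2)) g = 1 := by
        rw [hg, map_pow, map_mul]
        have hX : PowerSeries.map (Int.castRingHom (ZMod 2)) (1 + PowerSeries.X)
            = 1 - PowerSeries.X := by
          ext j
          simp [PowerSeries.coeff_map, PowerSeries.coeff_one, map_add, map_sub]
          rcases j with _ | _ | j <;> simp [PowerSeries.coeff_X]
        have hU : PowerSeries.map (Int.castRingHom (ZMod 2)) uu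
            = PowerSeries.mk 1 := by
          ext j; simp [uu, PowerSeries.coeff_map]
        rw [hX, hU, mul_comm, PowerSeries.mk_one_mul_one_sub_eq_one, one_pow]
      have := congrArg (PowerSeries.coeff (R := ZMod 2) m) hmap
      rw [PowerSeries.coeff_map, ← hα] at this
      simp only [PowerSeries.coeff_one, if_neg (show ¬ m = 0 by omega)] at this
      simpa using this
    have := (ZMod.intCast_zmod_eq_zero_iff_dvd (α m) 2).mp h2
    exact_mod_cast this
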